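/- (Necessary condition from Theorem 3.2, deterministic form.) In the setting of the exact-segmentation KKT conditions (1D TV with jump locations N_{•0} < … < N_{•L} and signs s₀ = s_L = 0, s₁,…,s_{L−1} ∈ {−1,+1}), suppose the TV estimate f̂_λ(y) achieves exact segmentation at some λ > 0 and that two consecutive interior jump signs are equal, s_{l−1} = s_l for some 2 ≤ l ≤ L−1. Then ĥ_l = ȳ_l, and for every i = 1,…,N_l the centered partial sums within piece l satisfy s_l · Σ_{k=1}^i ( y_{N_{•(l−1)}+k} − ȳ_l ) ∈ [0, 2λ]; in particular all these centered partial sums have the same sign. -/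

import Mathlib

open Matrix

/-- The total variation objective `F(f) = (1/2)‖y − f‖₂² + λ‖Bf‖₁`. -/
noncomputable def tvF {P M : ℕ} (B : Matrix (Fin P) (Fin M) ℝ) (lam : ℝ)
    (y f : Fin M → ℝ) : ℝ :=
  (1 / 2) * ∑ i, (y i - f i) ^ 2 + lam * ∑ j, |B.mulVec f j|

/-- The `(N−1)×N` finite-difference matrix of dimension one:
row `i` has `+1` in column `i` and `−1` in column `i+1`. -/
def oneDiff (N : ℕ) : Matrix (Fin (N - 1)) (Fin N) ℝ :=
  fun i j => if (j : ℕ) = (i : ℕ) then 1 else if (j : ℕ) = (i : ℕ) + 1 then -1 else 0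

/-- The mean `ȳ_l` of `y` over the `l`-th piece (0-based indices `Nb (l−1) ≤ j < Nb l`). -/
noncomputable def pieceMean {N : ℕ} (y : Fin N → ℝ) (Nb : ℕ → ℕ) (l : ℕ) : ℝ :=
  (∑ j : Fin N, if Nb (l - 1) ≤ (j : ℕ) ∧ (j : ℕ) < Nb l then y j else 0) /
    ((Nb l - Nb (l - 1) : ℕ) : ℝ)

/-- The partial sum `Σ_{k=1}^i y_{N_{•(l−1)}+k}` within the `l`-th piece. -/
noncomputable def piecePartialSum {N : ℕ} (y : Fin N → ℝ) (Nb : ℕ → ℕ) (l i : ℕ) : ℝ :=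
  ∑ j : Fin N, if Nb (l - 1) ≤ (j : ℕ) ∧ (j : ℕ) < Nb (l - 1) + i then y j else 0

lemma key_ineq {A C d : ℝ} (hd : 0 < d) (hC : 0 ≤ C)
    (h : ∀ t : ℝ, 0 < t → t ≤ d → 0 ≤ t * A + t ^ 2 * C) : 0 ≤ A := by
  by_contra hA
  push_neg at hA
  rcases eq_or_lt_of_le hC with hC0 | hC0
  · have := h d hd le_rfl
    nlinarith
  · set t := min d (-A / (2 * C)) with ht
    have ht0 : 0 < t := lt_min hd (div_pos (by linarith) (by linarith))
    have h1 := h t ht0 (min_le_left _ _)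
    have h2 : t ≤ -A / (2 * C) := min_le_right _ _
    have h3 : t * (2 * C) ≤ -A := (le_div_iff₀ (by linarith)).mp h2
    nlinarith

lemma sign_pm {x σ : ℝ} (h : Real.sign x = σ) (hσ : σ = 1 ∨ σ = -1) :
    x = σ * |x| ∧ x ≠ 0 := by
  rcases lt_trichotomy x 0 with hx | hx | hx
  · rw [Real.sign_of_neg hx] at h
    rcases hσ with h1 | h1
    · rw [h1] at h; norm_num at h
    · subst h1; rw [abs_of_neg hx]; exact ⟨by ring, ne_of_lt hx⟩
  · subst hx; rw [Real.sign_zero] at h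
    rcases hσ with h1 | h1 <;> rw [h1] at h <;> norm_num at h
  · rw [Real.sign_of_pos hx] at h
    subst h; rw [abs_of_pos hx]; exact ⟨by ring, ne_of_gt hx⟩

lemma abs_shift {x t σ : ℝ} (hσ : σ = 1 ∨ σ = -1) (hx : x = σ * |x|) (hx0 : x ≠ 0)
    (ht : |t| ≤ |x|) : |(-x) - t| - |x| = σ * t := by
  have hax : 0 < |x| := abs_pos.mpr hx0
  rcases abs_le.mp ht with ⟨ht1, ht2⟩
  rcases hσ with h1 | h1 <;> subst h1
  · have hxpos : x = |x| := by linarith [hx]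
    rw [abs_of_nonpos (by linarith), hxpos, abs_abs]; ring
  · have hxneg : x = -|x| := by linarith [hx]
    rw [abs_of_nonneg (by linarith [hxneg]), hxneg, abs_neg, abs_abs]; ring

lemma sum_indicator {N : ℕ} (a b : ℕ) (hb : b ≤ N) (f : ℕ → ℝ) :
    ∑ j : Fin N, (if a ≤ (j : ℕ) ∧ (j : ℕ) < b then f (j : ℕ) else 0)
      = ∑ j ∈ Finset.Ico a b, f j := by
  rw [Fin.sum_univ_eq_sum_range (fun j => if a ≤ j ∧ j < b then f j else 0) N,
    ← Finset.sum_filter]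
  congr 1
  ext j
  simp only [Finset.mem_filter, Finset.mem_range, Finset.mem_Ico]
  omega

lemma oneDiff_mulVec {N : ℕ} (f : Fin N → ℝ) (r : Fin (N - 1)) (k : ℕ)
    (hk : (r : ℕ) = k) (h1 : k < N) (h2 : k + 1 < N) :
    (oneDiff N).mulVec f r = f ⟨k, h1⟩ - f ⟨k + 1, h2⟩ := by
  subst hk
  unfold Matrix.mulVec dotProduct oneDiff
  have key : ∀ j : Fin N,
      (if (j : ℕ) = (r : ℕ) then (1:ℝ) else if (j : ℕ) = (r : ℕ) + 1 then -1 else 0) * f j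
        = (if j = (⟨(r : ℕ), h1⟩ : Fin N) then f j else 0)
          + (if j = (⟨(r : ℕ) + 1, h2⟩ : Fin N) then -(f j) else 0) := by
    intro j
    by_cases ha : (j : ℕ) = (r : ℕ) <;> by_cases hb : (j : ℕ) = (r : ℕ) + 1
    · omega
    · simp [Fin.ext_iff, ha, hb]
    · simp [Fin.ext_iff, ha, hb]
    · simp [Fin.ext_iff, ha, hb]
  rw [Finset.sum_congr rfl (fun j _ => key j), Finset.sum_add_distrib]
  simp [Finset.sum_ite_eq']
  ring

set_option maxHeartbeats 2000000 in
/-- necessary condition from Theorem 3.2, deterministic form: if the TV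
estimate achieves exact segmentation at some `λ > 0` and two consecutive interior jump
signs are equal (`s_{l−1} = s_l` for some `2 ≤ l ≤ L−1`), then `ĥ_l = ȳ_l` and for every
`i = 1,…,N_l` the centered partial sums within piece `l` satisfy
`s_l · Σ_{k=1}^i (y_{N_{•(l−1)}+k} − ȳ_l) ∈ [0, 2λ]`; in particular they all have the
same sign. -/
theorem tv_exact_segmentation_equal_signs_consequence
    (N L : ℕ) (hN : 2 ≤ N) (hL : 1 ≤ L)
    (y : Fin N → ℝ) (lam : ℝ) (hlam : 0 < lam)
    (Nb : ℕ → ℕ) (hNb0 : Nb 0 = 0) (hNbL : Nb L = N)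
    (hNbmono : ∀ l, l < L → Nb l < Nb (l + 1))
    (s : ℕ → ℝ) (hs0 : s 0 = 0) (hsL : s L = 0)
    (hs : ∀ l, 1 ≤ l → l ≤ L - 1 → s l = 1 ∨ s l = -1)
    (hhat : ℕ → ℝ)
    (hES : ∃ fhat : Fin N → ℝ,
      (∀ f : Fin N → ℝ, tvF (oneDiff N) lam y fhat ≤ tvF (oneDiff N) lam y f) ∧
      (∀ l, 1 ≤ l → l ≤ L →
        ∀ j : Fin N, Nb (l - 1) ≤ (j : ℕ) → (j : ℕ) < Nb l → fhat j = hhat l) ∧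
      (∀ l, 1 ≤ l → l ≤ L - 1 → Real.sign (hhat (l + 1) - hhat l) = s l))
    (l : ℕ) (hl2 : 2 ≤ l) (hlL : l ≤ L - 1)
    (hsame : s (l - 1) = s l) :
    hhat l = pieceMean y Nb l ∧
    ∀ i : ℕ, 1 ≤ i → i ≤ Nb l - Nb (l - 1) →
      0 ≤ s l * (piecePartialSum y Nb l i - (i : ℝ) * pieceMean y Nb l) ∧
      s l * (piecePartialSum y Nb l i - (i : ℝ) * pieceMean y Nb l) ≤ 2 * lam := by
  obtain ⟨fhat, hmin, hpiece, hjump⟩ := hES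
  have hL3 : 3 ≤ L := by omega
  have hmono : ∀ m, m ≤ L → ∀ k, k < m → Nb k < Nb m := by
    intro m
    induction m with
    | zero => intro _ k hk; omega
    | succ m ih =>
      intro hm k hk
      have h1 : Nb m < Nb (m + 1) := hNbmono m (by omega)
      rcases Nat.lt_succ_iff_lt_or_eq.mp hk with h | h
      · exact (ih (by omega) k h).trans h1
      · rw [h]; exact h1
  set a := Nb (l - 1) with ha
  set b := Nb l with hb
  have ha1 : 1 ≤ a := by
    have := hmono (l - 1) (by omega) 0 (by omega); omega
  have hab : a < b := hmono l (by omega) (l - 1) (by omega)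
  have hbN : b < N := by
    have := hmono L le_rfl l (by omega); omega
  -- value functions on ℕ
  set F : ℕ → ℝ := fun k => if h : k < N then fhat ⟨k, h⟩ else 0 with hFdef
  set Y : ℕ → ℝ := fun k => if h : k < N then y ⟨k, h⟩ else 0 with hYdef
  have hFv : ∀ (k : ℕ) (h : k < N), fhat ⟨k, h⟩ = F k := by
    intro k h; rw [hFdef]; simp [h]
  have hYv : ∀ j : Fin N, y j = Y (j : ℕ) := by
    intro j; rw [hYdef]; simp [j.2]
  -- piece values
  have hfl : ∀ k : ℕ, a ≤ k → k < b → F k = hhat l := by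
    intro k hk1 hk2
    have hkN : k < N := by omega
    rw [← hFv k hkN]
    exact hpiece l (by omega) (by omega) ⟨k, hkN⟩ hk1 hk2
  have hfl1 : F (a - 1) = hhat (l - 1) := by
    have hkN : a - 1 < N := by omega
    have h2 : Nb (l - 1 - 1) < a := hmono (l - 1) (by omega) (l - 1 - 1) (by omega)
    rw [← hFv _ hkN]
    exact hpiece (l - 1) (by omega) (by omega) ⟨a - 1, hkN⟩
      (by show Nb (l - 1 - 1) ≤ a - 1; omega) (by show a - 1 < a; omega)
  have hflp : F b = hhat (l + 1) := by
    have h2 : b < Nb (l + 1) := hNbmono l (by omega)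
    rw [← hFv _ hbN]
    refine hpiece (l + 1) (by omega) (by omega) ⟨b, hbN⟩ ?_ ?_
    · show Nb (l + 1 - 1) ≤ b
      have e1 : l + 1 - 1 = l := by omega
      rw [e1]
    · exact h2
  -- signs
  have hσ : s l = 1 ∨ s l = -1 := hs l (by omega) hlL
  have hsign1 : Real.sign (hhat l - hhat (l - 1)) = s l := by
    have h := hjump (l - 1) (by omega) (by omega)
    have e : l - 1 + 1 = l := by omega
    rw [e] at h
    rw [h, hsame]
  have hsign2 : Real.sign (hhat (l + 1) - hhat l) = s l := hjump l (by omega) hlL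
  obtain ⟨hx1, hx1ne⟩ := sign_pm hsign1 hσ
  obtain ⟨hx2, hx2ne⟩ := sign_pm hsign2 hσ
  -- perturbations
  set g : ℕ → ℝ → Fin N → ℝ :=
    fun i t j => fhat j + (if a ≤ (j : ℕ) ∧ (j : ℕ) < a + i then t else 0) with hgdef
  set Si : ℕ → ℝ := fun i => ∑ j ∈ Finset.Ico a (a + i), (Y j - hhat l) with hSidef
  set u1 : ℝ := F (a - 1) - F a with hu1def
  set u2 : ℕ → ℝ := fun i => F (a + i - 1) - F (a + i) with hu2def
  have hgj : ∀ (i : ℕ) (t : ℝ) (j : Fin N),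
      g i t j = fhat j + (if a ≤ (j : ℕ) ∧ (j : ℕ) < a + i then t else 0) := by
    intro i t j; rw [hgdef]
  have hgapp : ∀ (i : ℕ) (t : ℝ) (k : ℕ) (h : k < N),
      g i t ⟨k, h⟩ = F k + (if a ≤ k ∧ k < a + i then t else 0) := by
    intro i t k h
    rw [hgj i t ⟨k, h⟩, hFv k h]
  have hSiapp : ∀ i : ℕ, Si i = ∑ j ∈ Finset.Ico a (a + i), (Y j - hhat l) := by
    intro i; rw [hSidef]
  have hu2app : ∀ i : ℕ, u2 i = F (a + i - 1) - F (a + i) := by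
    intro i; rw [hu2def]
  have hu1 : u1 = -(hhat l - hhat (l - 1)) := by
    rw [hu1def, hfl1, hfl a le_rfl hab]; ring
  -- the main energy computation
  have hDelta : ∀ i : ℕ, 1 ≤ i → a + i ≤ b → ∀ t : ℝ,
      tvF (oneDiff N) lam y (g i t) = tvF (oneDiff N) lam y fhat
        + (((i : ℝ) / 2) * t ^ 2 - t * Si i)
        + lam * ((|u1 - t| - |u1|) + (|u2 i + t| - |u2 i|)) := by
    intro i hi1 hib t
    have haiN : a + i ≤ N := by omega
    -- quadratic part
    have hQ : ∑ j : Fin N, (y j - g i t j) ^ 2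
        = ∑ j : Fin N, (y j - fhat j) ^ 2 + ((i : ℝ) * t ^ 2 - 2 * t * Si i) := by
      have hptw : ∀ j : Fin N, (y j - g i t j) ^ 2
          = (y j - fhat j) ^ 2
            + (if a ≤ (j : ℕ) ∧ (j : ℕ) < a + i then t ^ 2 - 2 * t * (Y (j : ℕ) - hhat l) else 0) := by
        intro j
        rw [hgj i t j]
        by_cases h : a ≤ (j : ℕ) ∧ (j : ℕ) < a + i
        · have hfj : fhat j = hhat l := by
            rw [show fhat j = F (j : ℕ) from by rw [← hFv _ j.2]]
            exact hfl _ h.1 (by omega)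
          rw [if_pos h, if_pos h, hYv j, hfj]; ring
        · rw [if_neg h, if_neg h]; ring
      rw [Finset.sum_congr rfl (fun j _ => hptw j), Finset.sum_add_distrib]
      congr 1
      rw [sum_indicator a (a + i) haiN (fun k => t ^ 2 - 2 * t * (Y k - hhat l)),
        Finset.sum_sub_distrib, Finset.sum_const, Nat.card_Ico, ← Finset.mul_sum,
        Nat.add_sub_cancel_left, nsmul_eq_mul, hSiapp i]
    -- TV part
    have hb1 : a - 1 < N - 1 := by omega
    have hb2 : a + i - 1 < N - 1 := by omega
    have hne : (⟨a - 1, hb1⟩ : Fin (N - 1)) ≠ ⟨a + i - 1, hb2⟩ := by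
      simp only [ne_eq, Fin.ext_iff]; omega
    have hzero : ∀ r : Fin (N - 1),
        r ∉ ({⟨a - 1, hb1⟩, ⟨a + i - 1, hb2⟩} : Finset (Fin (N - 1))) →
        (oneDiff N).mulVec (g i t) r = (oneDiff N).mulVec fhat r := by
      intro r hr
      simp only [Finset.mem_insert, Finset.mem_singleton] at hr
      push_neg at hr
      have hv1 : (r : ℕ) ≠ a - 1 := fun h => hr.1 (Fin.ext h)
      have hv2 : (r : ℕ) ≠ a + i - 1 := fun h => hr.2 (Fin.ext h)
      have hrN : (r : ℕ) < N - 1 := r.2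
      rw [oneDiff_mulVec (g i t) r (r : ℕ) rfl (by omega) (by omega),
        oneDiff_mulVec fhat r (r : ℕ) rfl (by omega) (by omega)]
      rw [hgapp i t (r : ℕ) (by omega), hgapp i t ((r : ℕ) + 1) (by omega),
        hFv (r : ℕ) (by omega), hFv ((r : ℕ) + 1) (by omega)]
      have hcond : (a ≤ (r : ℕ) ∧ (r : ℕ) < a + i) ↔ (a ≤ (r : ℕ) + 1 ∧ (r : ℕ) + 1 < a + i) := by
        omega
      by_cases hc : a ≤ (r : ℕ) + 1 ∧ (r : ℕ) + 1 < a + i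
      · rw [if_pos hc, if_pos (hcond.mpr hc)]; ring
      · rw [if_neg hc, if_neg (fun hh => hc (hcond.mp hh))]; ring
    have e1a : a - 1 + 1 = a := by omega
    have e2a : a + i - 1 + 1 = a + i := by omega
    have hg1 : (oneDiff N).mulVec (g i t) ⟨a - 1, hb1⟩ = u1 - t := by
      rw [oneDiff_mulVec (g i t) _ (a - 1) rfl (by omega) (by omega)]
      rw [hgapp i t (a - 1) (by omega), hgapp i t (a - 1 + 1) (by omega)]
      rw [if_neg (show ¬(a ≤ a - 1 ∧ a - 1 < a + i) by omega),
        if_pos (show a ≤ a - 1 + 1 ∧ a - 1 + 1 < a + i by omega)]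
      rw [e1a, hu1def]; ring
    have hf1 : (oneDiff N).mulVec fhat ⟨a - 1, hb1⟩ = u1 := by
      rw [oneDiff_mulVec fhat _ (a - 1) rfl (by omega) (by omega)]
      rw [hFv (a - 1) (by omega), hFv (a - 1 + 1) (by omega), e1a, hu1def]
    have hg2 : (oneDiff N).mulVec (g i t) ⟨a + i - 1, hb2⟩ = u2 i + t := by
      rw [oneDiff_mulVec (g i t) _ (a + i - 1) rfl (by omega) (by omega)]
      rw [hgapp i t (a + i - 1) (by omega), hgapp i t (a + i - 1 + 1) (by omega)]
      rw [if_pos (show a ≤ a + i - 1 ∧ a + i - 1 < a + i by omega),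
        if_neg (show ¬(a ≤ a + i - 1 + 1 ∧ a + i - 1 + 1 < a + i) by omega)]
      rw [e2a, hu2app i]; ring
    have hf2 : (oneDiff N).mulVec fhat ⟨a + i - 1, hb2⟩ = u2 i := by
      rw [oneDiff_mulVec fhat _ (a + i - 1) rfl (by omega) (by omega)]
      rw [hFv (a + i - 1) (by omega), hFv (a + i - 1 + 1) (by omega), e2a, hu2app i]
    have hT : ∑ r : Fin (N - 1), |(oneDiff N).mulVec (g i t) r|
        = ∑ r : Fin (N - 1), |(oneDiff N).mulVec fhat r|
          + ((|u1 - t| - |u1|) + (|u2 i + t| - |u2 i|)) := by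
      have e1 : ∑ r : Fin (N - 1), |(oneDiff N).mulVec (g i t) r|
          = ∑ r : Fin (N - 1), |(oneDiff N).mulVec fhat r|
            + ∑ r : Fin (N - 1),
              (|(oneDiff N).mulVec (g i t) r| - |(oneDiff N).mulVec fhat r|) := by
        rw [← Finset.sum_add_distrib]
        exact Finset.sum_congr rfl (fun r _ => by ring)
      rw [e1]
      congr 1
      rw [← Finset.sum_subset (Finset.subset_univ ({⟨a - 1, hb1⟩, ⟨a + i - 1, hb2⟩} :
            Finset (Fin (N - 1))))
          (fun r _ hr => by rw [hzero r hr]; ring)]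
      rw [Finset.sum_pair hne, hg1, hf1, hg2, hf2]
    -- assemble
    simp only [tvF]
    rw [hQ, hT]
    ring
  -- base inequality from minimality
  have hineq : ∀ i : ℕ, 1 ≤ i → a + i ≤ b → ∀ t : ℝ,
      0 ≤ (((i : ℝ) / 2) * t ^ 2 - t * Si i)
        + lam * ((|u1 - t| - |u1|) + (|u2 i + t| - |u2 i|)) := by
    intro i h1 h2 t
    have h := hmin (g i t)
    rw [hDelta i h1 h2 t] at h
    linarith
  have habs_u1 : ∀ t : ℝ, |t| ≤ |hhat l - hhat (l - 1)| → |u1 - t| - |u1| = s l * t := by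
    intro t ht
    rw [hu1, abs_neg]
    exact abs_shift hσ hx1 hx1ne ht
  -- full piece facts
  have hn1 : 1 ≤ b - a := by omega
  have hnb : a + (b - a) ≤ b := by omega
  have heb : a + (b - a) = b := by omega
  have hu2full : u2 (b - a) = -(hhat (l + 1) - hhat l) := by
    rw [hu2app, heb, hfl (b - 1) (by omega) (by omega), hflp]
    ring
  have habs_u2full : ∀ t : ℝ, |t| ≤ |hhat (l + 1) - hhat l| →
      |u2 (b - a) + t| - |u2 (b - a)| = -(s l) * t := by
    intro t ht
    rw [hu2full, abs_neg]
    have e : -(hhat (l + 1) - hhat l) + t = -(hhat (l + 1) - hhat l) - (-t) := by ring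
    rw [e, abs_shift hσ hx2 hx2ne (by rw [abs_neg]; exact ht)]
    ring
  have hd1pos : (0 : ℝ) < |hhat l - hhat (l - 1)| := abs_pos.mpr hx1ne
  have hd2pos : (0 : ℝ) < |hhat (l + 1) - hhat l| := abs_pos.mpr hx2ne
  set d : ℝ := min |hhat l - hhat (l - 1)| |hhat (l + 1) - hhat l| with hddef
  have hdpos : 0 < d := lt_min hd1pos hd2pos
  have hfull : ∀ t : ℝ, |t| ≤ d → 0 ≤ (((b - a : ℕ) : ℝ) / 2) * t ^ 2 - t * Si (b - a) := by
    intro t ht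
    have h := hineq (b - a) hn1 hnb t
    rw [habs_u1 t (le_trans ht (min_le_left _ _)),
      habs_u2full t (le_trans ht (min_le_right _ _))] at h
    have e0 : lam * (s l * t + -(s l) * t) = 0 := by ring
    rw [e0] at h
    linarith [h]
  have hC : (0 : ℝ) ≤ ((b - a : ℕ) : ℝ) / 2 := by positivity
  have hS1 : 0 ≤ -Si (b - a) := by
    apply key_ineq hdpos hC
    intro t ht0 htd
    have := hfull t (by rw [abs_of_pos ht0]; exact htd)
    linarith
  have hS2 : 0 ≤ Si (b - a) := by
    apply key_ineq hdpos hC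
    intro t ht0 htd
    have := hfull (-t) (by rw [abs_neg, abs_of_pos ht0]; exact htd)
    nlinarith [this, sq_abs t]
  have hSn0 : Si (b - a) = 0 := le_antisymm (by linarith) hS2
  -- mean identity
  have hcast : ((b - a : ℕ) : ℝ) ≠ 0 := by
    have : 0 < b - a := by omega
    positivity
  have hsumY : ∑ j ∈ Finset.Ico a b, Y j = ((b - a : ℕ) : ℝ) * hhat l := by
    have h := hSn0
    rw [hSiapp] at h
    rw [heb] at h
    rw [Finset.sum_sub_distrib, Finset.sum_const, Nat.card_Ico, nsmul_eq_mul] at h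
    linarith [h]
  have hmean : pieceMean y Nb l = hhat l := by
    unfold pieceMean
    rw [Finset.sum_congr rfl (fun j _ => by rw [hYv j])]
    rw [sum_indicator a b (le_of_lt hbN) Y, hsumY]
    show ((b - a : ℕ) : ℝ) * hhat l / ((b - a : ℕ) : ℝ) = hhat l
    exact mul_div_cancel_left₀ _ hcast
  have hSiT : ∀ i : ℕ, i ≤ b - a →
      piecePartialSum y Nb l i - (i : ℝ) * pieceMean y Nb l = Si i := by
    intro i hi
    have haiN : a + i ≤ N := by omega
    unfold piecePartialSum
    rw [Finset.sum_congr rfl (fun j _ => by rw [hYv j])]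
    rw [sum_indicator a (a + i) haiN Y, hmean, hSiapp]
    rw [Finset.sum_sub_distrib, Finset.sum_const, Nat.card_Ico, Nat.add_sub_cancel_left,
      nsmul_eq_mul]
  constructor
  · exact hmean.symm
  · intro i hi1 hi2
    rw [hSiT i hi2]
    rcases eq_or_lt_of_le hi2 with hieq | hilt
    · rw [hieq, hSn0]
      constructor
      · simp
      · simp; linarith
    · -- interior cut : u2 i = 0
      have haib : a + i < b := by omega
      have hu2z : u2 i = 0 := by
        rw [hu2app, hfl (a + i - 1) (by omega) (by omega), hfl (a + i) (by omega) haib]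
        ring
      have hcut : ∀ t : ℝ, |t| ≤ |hhat l - hhat (l - 1)| →
          0 ≤ (((i : ℝ) / 2) * t ^ 2 - t * Si i) + lam * (s l * t + |t|) := by
        intro t ht
        have h := hineq i hi1 (by omega) t
        rw [habs_u1 t ht, hu2z] at h
        simp only [add_zero, zero_add, abs_zero, sub_zero] at h
        linarith
      have hCi : (0 : ℝ) ≤ (i : ℝ) / 2 := by positivity
      have hup : 0 ≤ -Si i + lam * s l + lam := by
        apply key_ineq hd1pos hCi
        intro t ht0 htd
        have h := hcut t (by rw [abs_of_pos ht0]; exact htd)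
        rw [abs_of_pos ht0] at h
        linarith
      have hlo : 0 ≤ Si i - lam * s l + lam := by
        apply key_ineq hd1pos hCi
        intro t ht0 htd
        have h := hcut (-t) (by rw [abs_neg, abs_of_pos ht0]; exact htd)
        rw [abs_neg, abs_of_pos ht0] at h
        nlinarith [h, sq_abs t]
      rcases hσ with h1 | h1 <;> rw [h1] at hup hlo ⊢ <;> constructor <;> linarith
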